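/- The monoid M_n = Mon⟨a,b,c,d : aⁿb=0, ac=1, db=1, dc=1, daᵏb=1 for 1 ≤ k ≤ n-1⟩ is congruence-free for every n ≥ 1: its only congruences are the identity relation and the full relation M_n × M_n. -/

import Mathlib

inductive Letter | a | b | c | d | z
deriving DecidableEq

abbrev W := FreeMonoid Letter
def A : W := FreeMonoid.of .a
def B : W := FreeMonoid.of .b
def C : W := FreeMonoid.of .c
def D : W := FreeMonoid.of .d
def Z : W := FreeMonoid.of .z

/-- The defining relations of `M n`, with the zero realized by the letter `z`. -/
def relM (n : ℕ) : W → W → Prop := fun x y =>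
  (x = A ^ n * B ∧ y = Z) ∨
  (x = A * C ∧ y = 1) ∨ (x = D * B ∧ y = 1) ∨ (x = D * C ∧ y = 1) ∨
  (∃ k, 1 ≤ k ∧ k ≤ n - 1 ∧ x = D * A ^ k * B ∧ y = 1) ∨
  (∃ l : Letter, x = FreeMonoid.of l * Z ∧ y = Z) ∨
  (∃ l : Letter, x = Z * FreeMonoid.of l ∧ y = Z)

def Mcon (n : ℕ) : Con W := conGen (relM n)

/-- The monoid `M n = Mon⟨a,b,c,d : aⁿb=0, ac=1, db=1, dc=1, daᵏb=1 (1 ≤ k ≤ n-1)⟩`. -/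
abbrev M (n : ℕ) := (Mcon n).Quotient



inductive AD | a | d deriving DecidableEq
inductive Tok | tc | tb (m : ℕ) deriving DecidableEq

variable (n : ℕ)

def mix : List AD → List Tok → Option (List Tok ⊕ List AD)
  | [], β => some (.inl β)
  | x :: rα, [] => some (.inr (x :: rα))
  | x :: rα, t :: β =>
    match x, t with
    | .d, _ => mix rα β
    | .a, .tc => mix rα β
    | .a, .tb m => if m + 1 < n then mix rα (.tb (m+1) :: β) else none

theorem mixL1 (rα : List AD) : ∀ β β' : List Tok, mix n rα (β ++ β') =
    match mix n rα β with
    | none => none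
    | some (.inl γ) => some (.inl (γ ++ β'))
    | some (.inr rδ) => mix n rδ β' := by
  induction rα with
  | nil => intro β β'; simp [mix]
  | cons x rα ih =>
    intro β β'
    cases β with
    | nil =>
      simp [mix]
    | cons t β =>
      cases x with
      | d => simpa [mix] using ih β β'
      | a =>
        cases t with
        | tc => simpa [mix] using ih β β'
        | tb m =>
          by_cases h : m + 1 < n
          · simpa [mix, h] using ih (.tb (m+1) :: β) β'
          · simp [mix, h]

theorem mixL2 (rα : List AD) : ∀ (rα' : List AD) (β : List Tok), mix n (rα ++ rα') β =
    match mix n rα β with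
    | none => none
    | some (.inl γ) => mix n rα' γ
    | some (.inr rδ) => some (.inr (rδ ++ rα')) := by
  induction rα with
  | nil => intro rα' β; simp [mix]
  | cons x rα ih =>
    intro rα' β
    cases β with
    | nil => simp [mix]
    | cons t β =>
      cases x with
      | d => simpa [mix] using ih rα' β
      | a =>
        cases t with
        | tc => simpa [mix] using ih rα' β
        | tb m =>
          by_cases h : m + 1 < n
          · simpa [mix, h] using ih rα' (.tb (m+1) :: β)
          · simp [mix, h]


abbrev NF0 : Type := Option (List Tok × List AD)

def nmul : NF0 → NF0 → NF0
  | some (β₁, rα₁), some (β₂, rα₂) =>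
    match mix n rα₁ β₂ with
    | none => none
    | some (.inl γ) => some (β₁ ++ γ, rα₂)
    | some (.inr rδ) => some (β₁, rα₂ ++ rδ)
  | _, _ => none

@[simp] theorem nmul_none (x : NF0) : nmul n x none = none := by
  cases x with
  | none => rfl
  | some p => obtain ⟨β, rα⟩ := p; rfl

@[simp] theorem none_nmul (x : NF0) : nmul n none x = none := by
  cases x <;> rfl

theorem nmul_some (β₁ rα₁ β₂ rα₂) : nmul n (some (β₁, rα₁)) (some (β₂, rα₂)) =
    match mix n rα₁ β₂ with
    | none => none
    | some (.inl γ) => some (β₁ ++ γ, rα₂)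
    | some (.inr rδ) => some (β₁, rα₂ ++ rδ) := rfl

theorem nmul_mix_none {β₁ rα₁ β₂ rα₂} (h : mix n rα₁ β₂ = none) :
    nmul n (some (β₁, rα₁)) (some (β₂, rα₂)) = none := by rw [nmul_some, h]

theorem nmul_mix_inl {β₁ rα₁ β₂ rα₂ γ} (h : mix n rα₁ β₂ = some (.inl γ)) :
    nmul n (some (β₁, rα₁)) (some (β₂, rα₂)) = some (β₁ ++ γ, rα₂) := by rw [nmul_some, h]

theorem nmul_mix_inr {β₁ rα₁ β₂ rα₂ rδ} (h : mix n rα₁ β₂ = some (.inr rδ)) :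
    nmul n (some (β₁, rα₁)) (some (β₂, rα₂)) = some (β₁, rα₂ ++ rδ) := by rw [nmul_some, h]

@[simp] theorem one_nmul (x : NF0) : nmul n (some ([], [])) x = x := by
  cases x with
  | none => rfl
  | some p => obtain ⟨β, rα⟩ := p; rw [nmul_mix_inl n (γ := β) (by simp [mix])]; simp

@[simp] theorem nmul_one (x : NF0) : nmul n x (some ([], [])) = x := by
  cases x with
  | none => rfl
  | some p =>
    obtain ⟨β, rα⟩ := p
    cases rα with
    | nil => rw [nmul_mix_inl n (γ := []) (by simp [mix])]; simp
    | cons x rα => rw [nmul_mix_inr n (rδ := x :: rα) (by simp [mix])]; simp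

theorem nmul_assoc (x y z : NF0) :
    nmul n (nmul n x y) z = nmul n x (nmul n y z) := by
  cases x with
  | none => simp
  | some p =>
  cases y with
  | none => simp
  | some q =>
  cases z with
  | none => simp
  | some r =>
  obtain ⟨β₁, rα₁⟩ := p; obtain ⟨β₂, rα₂⟩ := q; obtain ⟨β₃, rα₃⟩ := r
  rcases h12 : mix n rα₁ β₂ with _ | γδ
  · rw [nmul_mix_none n h12, none_nmul]
    rcases h23 : mix n rα₂ β₃ with _ | γδ'
    · rw [nmul_mix_none n h23, nmul_none]
    · rcases γδ' with γ' | rδ'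
      · rw [nmul_mix_inl n h23, nmul_mix_none n]
        rw [mixL1, h12]
      · rw [nmul_mix_inr n h23, nmul_mix_none n h12]
  · rcases γδ with γ | rδ
    · rw [nmul_mix_inl n h12]
      rcases h23 : mix n rα₂ β₃ with _ | γδ'
      · rw [nmul_mix_none n h23, nmul_mix_none n h23, nmul_none]
      · rcases γδ' with γ' | rδ'
        · rw [nmul_mix_inl n h23, nmul_mix_inl n h23,
            nmul_mix_inl n (γ := γ ++ γ') (by rw [mixL1, h12]), List.append_assoc]
        · rw [nmul_mix_inr n h23, nmul_mix_inr n h23, nmul_mix_inl n h12]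
    · rw [nmul_mix_inr n h12]
      rcases h23 : mix n rα₂ β₃ with _ | γδ'
      · rw [nmul_mix_none n h23, nmul_none, nmul_mix_none n]
        rw [mixL2, h23]
      · rcases γδ' with γ' | rδ'
        · rw [nmul_mix_inl n h23]
          have hmm : mix n (rα₂ ++ rδ) β₃ = mix n rδ γ' := by rw [mixL2, h23]
          have h1 : mix n rα₁ (β₂ ++ γ') = mix n rδ γ' := by rw [mixL1, h12]
          rcases hδ : mix n rδ γ' with _ | γδ''
          · rw [nmul_mix_none n (hmm.trans hδ), nmul_mix_none n (h1.trans hδ)]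
          · rcases γδ'' with γ'' | rδ''
            · rw [nmul_mix_inl n (hmm.trans hδ), nmul_mix_inl n (h1.trans hδ)]
            · rw [nmul_mix_inr n (hmm.trans hδ), nmul_mix_inr n (h1.trans hδ)]
        · rw [nmul_mix_inr n h23, nmul_mix_inr n (by rw [mixL2, h23]),
            nmul_mix_inr n h12, List.append_assoc]

/-! ## The normal-form monoid -/

structure NFM (n : ℕ) : Type where
  val : NF0

namespace NFM

variable {n : ℕ}

@[ext] theorem ext {x y : NFM n} (h : x.val = y.val) : x = y := by
  cases x; cases y; simp_all

instance : One (NFM n) := ⟨⟨some ([], [])⟩⟩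
instance : Mul (NFM n) := ⟨fun x y => ⟨nmul n x.val y.val⟩⟩

@[simp] theorem val_mul (x y : NFM n) : (x * y).val = nmul n x.val y.val := rfl
@[simp] theorem val_one : (1 : NFM n).val = some ([], []) := rfl

instance : Monoid (NFM n) where
  one_mul x := by ext; simp
  mul_one x := by ext; simp
  mul_assoc x y z := by ext; simp [nmul_assoc]

end NFM

def letterNF (n : ℕ) : Letter → NFM n
  | .a => ⟨some ([], [.a])⟩
  | .b => ⟨some ([.tb 0], [])⟩
  | .c => ⟨some ([.tc], [])⟩
  | .d => ⟨some ([], [.d])⟩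
  | .z => ⟨none⟩

def phi (n : ℕ) : W →* NFM n := FreeMonoid.lift (letterNF n)

/-! ## Reading back normal forms as words -/

def tokW : Tok → W
  | .tc => C
  | .tb m => A ^ m * B

def adW : AD → W
  | .a => A
  | .d => D

def iotaT : List Tok → W
  | [] => 1
  | t :: β => tokW t * iotaT β

def iotaA : List AD → W
  | [] => 1
  | x :: r => iotaA r * adW x

def iota : NF0 → W
  | none => Z
  | some (β, rα) => iotaT β * iotaA rα

/-! ## Basic facts about the congruence -/

section Rels

variable {n : ℕ}

theorem mrel {u v : W} (h : relM n u v) : Mcon n u v := ConGen.Rel.of u v h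

theorem mAB : Mcon n (A ^ n * B) Z := mrel (Or.inl ⟨rfl, rfl⟩)
theorem mAC : Mcon n (A * C) 1 := mrel (Or.inr (Or.inl ⟨rfl, rfl⟩))
theorem mDB : Mcon n (D * B) 1 := mrel (Or.inr (Or.inr (Or.inl ⟨rfl, rfl⟩)))
theorem mDC : Mcon n (D * C) 1 := mrel (Or.inr (Or.inr (Or.inr (Or.inl ⟨rfl, rfl⟩))))
theorem mDAB {k : ℕ} (h1 : 1 ≤ k) (h2 : k ≤ n - 1) : Mcon n (D * A ^ k * B) 1 :=
  mrel (Or.inr (Or.inr (Or.inr (Or.inr (Or.inl ⟨k, h1, h2, rfl, rfl⟩)))))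
theorem mLZ (l : Letter) : Mcon n (FreeMonoid.of l * Z) Z :=
  mrel (Or.inr (Or.inr (Or.inr (Or.inr (Or.inr (Or.inl ⟨l, rfl, rfl⟩))))))
theorem mZL (l : Letter) : Mcon n (Z * FreeMonoid.of l) Z :=
  mrel (Or.inr (Or.inr (Or.inr (Or.inr (Or.inr (Or.inr ⟨l, rfl, rfl⟩))))))

theorem absorbR (w : W) : Mcon n (w * Z) Z := by
  induction w using FreeMonoid.recOn with
  | one => simpa using (Mcon n).refl Z
  | of_mul x xs ih =>
    have h1 : Mcon n (FreeMonoid.of x * xs * Z) (FreeMonoid.of x * Z) := by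
      rw [mul_assoc]
      simpa using (Mcon n).mul ((Mcon n).refl (FreeMonoid.of x)) ih
    exact h1.trans (mLZ x)

theorem absorbL (w : W) : Mcon n (Z * w) Z := by
  induction w using FreeMonoid.recOn with
  | one => simpa using (Mcon n).refl Z
  | of_mul x xs ih =>
    have h1 : Mcon n (Z * (FreeMonoid.of x * xs)) (Z * xs) := by
      rw [← mul_assoc]
      exact (Mcon n).mul (mZL x) ((Mcon n).refl xs)
    exact h1.trans ih

end Rels

/-! ## Values of `phi` -/

section PhiComp

variable {n : ℕ}

@[simp] theorem phi_A : (phi n A).val = some ([], [.a]) := rfl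
@[simp] theorem phi_B : (phi n B).val = some ([.tb 0], []) := rfl
@[simp] theorem phi_C : (phi n C).val = some ([.tc], []) := rfl
@[simp] theorem phi_D : (phi n D).val = some ([], [.d]) := rfl
@[simp] theorem phi_Z : (phi n Z).val = none := rfl
@[simp] theorem phi_one : (phi n (1 : W)).val = some ([], []) := rfl

theorem phi_pow_A (k : ℕ) : (phi n (A ^ k)).val = some ([], List.replicate k .a) := by
  induction k with
  | zero => simp
  | succ k ih =>
    have : A ^ (k + 1) = A * A ^ k := by rw [pow_succ'];
    rw [this, map_mul]
    rw [NFM.val_mul, phi_A, ih]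
    rw [nmul_mix_inr n (rδ := [.a]) (by cases k <;> simp [mix])]
    simp [List.replicate_succ']

theorem mix_rep_a_lt {k m : ℕ} (h : m + k < n) :
    mix n (List.replicate k .a) [.tb m] = some (.inl [.tb (m + k)]) := by
  induction k generalizing m with
  | zero => simp [mix]
  | succ k ih =>
    rw [List.replicate_succ]
    have hg : m + 1 < n := by omega
    simp only [mix, if_pos hg]
    have := ih (m := m + 1) (by omega)
    rw [this]
    have e : m + 1 + k = m + (k + 1) := by omega
    rw [e]

theorem mix_rep_a_ge {k m : ℕ} (h : n ≤ m + k) (hm : m < n) :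
    mix n (List.replicate k .a) [.tb m] = none := by
  induction k generalizing m with
  | zero => exact absurd h (by omega)
  | succ k ih =>
    rw [List.replicate_succ]
    by_cases hg : m + 1 < n
    · simp only [mix, if_pos hg]
      exact ih (by omega) hg
    · simp only [mix, if_neg hg]

theorem phi_An_B (hn : 1 ≤ n) : (phi n (A ^ n * B)).val = none := by
  rw [map_mul, NFM.val_mul, phi_pow_A, phi_B]
  exact nmul_mix_none n (mix_rep_a_ge (by omega) hn)

theorem phi_DAkB (hn : 1 ≤ n) {k : ℕ} (h1 : 1 ≤ k) (h2 : k ≤ n - 1) :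
    (phi n (D * A ^ k * B)).val = some ([], []) := by
  have e1 : (phi n (D * A ^ k)).val = some ([], List.replicate k .a ++ [.d]) := by
    rw [map_mul, NFM.val_mul, phi_D, phi_pow_A]
    rw [nmul_mix_inr n (rδ := [.d]) (by simp [mix])]
  rw [map_mul, NFM.val_mul, e1, phi_B]
  rw [nmul_mix_inl n (γ := [])]
  · simp
  · rw [mixL2, mix_rep_a_lt (by omega)]
    simp [mix]

theorem phi_rel (hn : 1 ≤ n) {u v : W} (h : relM n u v) : phi n u = phi n v := by
  rcases h with ⟨hu, hv⟩ | ⟨hu, hv⟩ | ⟨hu, hv⟩ | ⟨hu, hv⟩ | ⟨k, h1, h2, hu, hv⟩ |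
    ⟨l, hu, hv⟩ | ⟨l, hu, hv⟩ <;> subst hu <;> subst hv <;> apply NFM.ext
  · rw [phi_An_B hn, phi_Z]
  · rw [map_mul, NFM.val_mul, phi_A, phi_C, phi_one]
    rw [nmul_mix_inl n (γ := []) (by simp [mix])]; simp
  · rw [map_mul, NFM.val_mul, phi_D, phi_B, phi_one]
    rw [nmul_mix_inl n (γ := []) (by simp [mix])]; simp
  · rw [map_mul, NFM.val_mul, phi_D, phi_C, phi_one]
    rw [nmul_mix_inl n (γ := []) (by simp [mix])]; simp
  · rw [phi_DAkB hn h1 h2, phi_one]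
  · rw [map_mul, NFM.val_mul]; simp
  · rw [map_mul, NFM.val_mul]; simp

theorem phi_mcon (hn : 1 ≤ n) {u v : W} (h : Mcon n u v) : phi n u = phi n v := by
  have : Mcon n ≤ Con.ker (phi n) := Con.conGen_le.2 (fun x y hxy => (Con.ker_rel _).2 (phi_rel hn hxy))
  exact (Con.ker_rel _).1 (this h)

end PhiComp

/-! ## Well-formedness -/

section WF

variable {n : ℕ}

def wfT (n : ℕ) (β : List Tok) : Prop := ∀ m : ℕ, Tok.tb m ∈ β → m < n

def wfN (n : ℕ) (s : NF0) : Prop := ∀ β rα, s = some (β, rα) → wfT n β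

theorem wfT_cons {t : Tok} {β : List Tok} (h : wfT n (t :: β)) : wfT n β :=
  fun m hm => h m (List.mem_cons_of_mem _ hm)

theorem mix_wf : ∀ (rα : List AD) (β γ : List Tok), wfT n β →
    mix n rα β = some (.inl γ) → wfT n γ := by
  intro rα
  induction rα with
  | nil => intro β γ hβ h; simp [mix] at h; rwa [← h]
  | cons x rα ih =>
    intro β γ hβ h
    cases β with
    | nil => simp [mix] at h
    | cons t β =>
      cases x with
      | d => exact ih β γ (wfT_cons hβ) h
      | a =>
        cases t with
        | tc => exact ih β γ (wfT_cons hβ) h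
        | tb m =>
          by_cases hg : m + 1 < n
          · simp only [mix, if_pos hg] at h
            refine ih _ γ ?_ h
            intro m' hm'
            rcases List.mem_cons.1 hm' with h' | h'
            · cases h'; exact hg
            · exact wfT_cons hβ m' h'
          · simp only [mix, if_neg hg] at h
            cases h

theorem nmul_wf {x y : NF0} (hx : wfN n x) (hy : wfN n y) : wfN n (nmul n x y) := by
  cases x with
  | none => intro β rα h; simp at h
  | some p =>
  cases y with
  | none => intro β rα h; rw [nmul_none] at h; simp at h
  | some q =>
    obtain ⟨β₁, rα₁⟩ := p; obtain ⟨β₂, rα₂⟩ := q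
    rcases h12 : mix n rα₁ β₂ with _ | γδ
    · rw [nmul_mix_none n h12]; intro β rα h; simp at h
    · rcases γδ with γ | rδ
      · rw [nmul_mix_inl n h12]
        intro β rα h
        injection h with h; injection h with h1 h2; subst h1
        intro m hm
        rcases List.mem_append.1 hm with h' | h'
        · exact hx β₁ rα₁ rfl m h'
        · exact mix_wf rα₁ β₂ γ (hy β₂ rα₂ rfl) h12 m h'
      · rw [nmul_mix_inr n h12]
        intro β rα h
        injection h with h; injection h with h1 h2; subst h1
        exact hx β₁ rα₁ rfl

theorem phi_wf (hn : 1 ≤ n) (w : W) : wfN n (phi n w).val := by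
  induction w using FreeMonoid.recOn with
  | one => intro β rα h; injection h with h; injection h with h1 h2; subst h1; intro m hm; simp at hm
  | of_mul x xs ih =>
    rw [map_mul, NFM.val_mul]
    refine nmul_wf ?_ ih
    cases x with
    | a => intro β rα h; injection h with h; injection h with h1 h2; subst h1
           intro m hm; simp at hm
    | b => intro β rα h; injection h with h; injection h with h1 h2; subst h1
           intro m hm; simp at hm; subst hm; omega
    | c => intro β rα h; injection h with h; injection h with h1 h2; subst h1
           intro m hm; simp at hm
    | d => intro β rα h; injection h with h; injection h with h1 h2; subst h1
           intro m hm; simp at hm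
    | z => intro β rα h; cases h

end WF

/-! ## Soundness of the normal form map -/

section Sound

variable {n : ℕ}

theorem mconL {u v : W} (w : W) (h : Mcon n u v) : Mcon n (w * u) (w * v) :=
  (Mcon n).mul ((Mcon n).refl w) h

theorem mconR {u v : W} (w : W) (h : Mcon n u v) : Mcon n (u * w) (v * w) :=
  (Mcon n).mul h ((Mcon n).refl w)

theorem mcon_of_eq {u v : W} (h : u = v) : Mcon n u v := h ▸ (Mcon n).refl u

theorem iotaA_append (r₁ r₂ : List AD) : iotaA (r₁ ++ r₂) = iotaA r₂ * iotaA r₁ := by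
  induction r₁ with
  | nil => simp [iotaA]
  | cons x r₁ ih => simp [iotaA, ih, mul_assoc]

theorem A_def : A = FreeMonoid.of Letter.a := rfl
theorem B_def : B = FreeMonoid.of Letter.b := rfl
theorem C_def : C = FreeMonoid.of Letter.c := rfl
theorem D_def : D = FreeMonoid.of Letter.d := rfl
theorem Z_def : Z = FreeMonoid.of Letter.z := rfl

/-- The key one-letter multiplication lemma. -/
theorem R2aux (hn : 1 ≤ n) (l : Letter) (s : NF0) (hs : wfN n s) :
    Mcon n (FreeMonoid.of l * iota s) (iota (nmul n (letterNF n l).val s)) := by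
  cases s with
  | none =>
    rw [nmul_none]
    exact mLZ l
  | some p =>
    obtain ⟨β, rα⟩ := p
    cases l with
    | z =>
      rw [show (letterNF n .z).val = none from rfl, none_nmul]
      exact absorbL _
    | b =>
      rw [show (letterNF n .b).val = some ([.tb 0], []) from rfl,
        nmul_mix_inl n (γ := β) (by simp [mix])]
      apply mcon_of_eq
      simp [iota, iotaT, tokW, mul_assoc, A_def, B_def, C_def, D_def, Z_def]
    | c =>
      rw [show (letterNF n .c).val = some ([.tc], []) from rfl,
        nmul_mix_inl n (γ := β) (by simp [mix])]
      apply mcon_of_eq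
      simp [iota, iotaT, tokW, mul_assoc, A_def, B_def, C_def, D_def, Z_def]
    | a =>
      rw [show (letterNF n .a).val = some ([], [.a]) from rfl]
      cases β with
      | nil =>
        rw [nmul_mix_inr n (rδ := [.a]) (by simp [mix])]
        apply mcon_of_eq
        simp [iota, iotaT, iotaA_append, iotaA, adW, mul_assoc, A_def, B_def, C_def, D_def, Z_def]
      | cons t γ =>
        cases t with
        | tc =>
          rw [nmul_mix_inl n (γ := γ) (by simp [mix])]
          have h := mconR (iotaT γ * iotaA rα) (mAC (n := n))
          simp only [one_mul] at h
          refine ((Mcon n).trans (mcon_of_eq ?_) h)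
          simp [iota, iotaT, tokW, mul_assoc, A_def, B_def, C_def, D_def, Z_def]
        | tb m =>
          have hm : m < n := hs _ _ rfl m (by simp)
          by_cases hg : m + 1 < n
          · rw [nmul_mix_inl n (γ := Tok.tb (m+1) :: γ) (by simp [mix, hg])]
            apply mcon_of_eq
            simp [iota, iotaT, tokW, pow_succ', mul_assoc, A_def, B_def, C_def, D_def, Z_def]
          · have hmn : m + 1 = n := by omega
            rw [nmul_mix_none n (by simp [mix, hg])]
            have h1 : Mcon n (A ^ n * B * (iotaT γ * iotaA rα)) (Z * (iotaT γ * iotaA rα)) :=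
              mconR _ mAB
            have h2 := h1.trans (absorbL _)
            refine ((Mcon n).trans (mcon_of_eq ?_) h2)
            rw [← hmn, pow_succ']
            simp [iota, iotaT, tokW, mul_assoc, A_def, B_def, C_def, D_def, Z_def]
    | d =>
      rw [show (letterNF n .d).val = some ([], [.d]) from rfl]
      cases β with
      | nil =>
        rw [nmul_mix_inr n (rδ := [.d]) (by simp [mix])]
        apply mcon_of_eq
        simp [iota, iotaT, iotaA_append, iotaA, adW, mul_assoc, A_def, B_def, C_def, D_def, Z_def]
      | cons t γ =>
        cases t with
        | tc =>
          rw [nmul_mix_inl n (γ := γ) (by simp [mix])]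
          have h := mconR (iotaT γ * iotaA rα) (mDC (n := n))
          simp only [one_mul] at h
          refine ((Mcon n).trans (mcon_of_eq ?_) h)
          simp [iota, iotaT, tokW, mul_assoc, A_def, B_def, C_def, D_def, Z_def]
        | tb m =>
          have hm : m < n := hs _ _ rfl m (by simp)
          rw [nmul_mix_inl n (γ := γ) (by simp [mix])]
          have key : Mcon n (D * (A ^ m * B)) 1 := by
            rcases Nat.eq_zero_or_pos m with h0 | h0
            · subst h0; simpa using mDB (n := n)
            · simpa [mul_assoc] using mDAB (n := n) h0 (by omega)
          have h := mconR (iotaT γ * iotaA rα) key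
          simp only [one_mul] at h
          refine ((Mcon n).trans (mcon_of_eq ?_) h)
          simp [iota, iotaT, tokW, mul_assoc, A_def, B_def, C_def, D_def, Z_def]

theorem R2 (hn : 1 ≤ n) (w : W) : Mcon n w (iota (phi n w).val) := by
  induction w using FreeMonoid.recOn with
  | one => exact mcon_of_eq (by simp [iota, iotaT, iotaA])
  | of_mul x xs ih =>
    have h1 : Mcon n (FreeMonoid.of x * xs) (FreeMonoid.of x * iota (phi n xs).val) :=
      mconL _ ih
    have h2 := R2aux hn x (phi n xs).val (phi_wf hn xs)
    refine (h1.trans h2).trans (mcon_of_eq ?_)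
    rw [map_mul, NFM.val_mul]
    rfl

end Sound

/-! ## `phi` is a retraction of `iota` -/

section R1

variable {n : ℕ}

theorem phi_AmB {m : ℕ} (hm : m < n) : (phi n (A ^ m * B)).val = some ([.tb m], []) := by
  rw [map_mul, NFM.val_mul, phi_pow_A, phi_B]
  rw [nmul_mix_inl n (γ := [.tb m]) (by simpa using mix_rep_a_lt (k := m) (m := 0) (by omega))]
  simp

theorem phi_iotaT (β : List Tok) (hβ : wfT n β) : (phi n (iotaT β)).val = some (β, []) := by
  induction β with
  | nil => rfl
  | cons t γ ih =>
    have hγ := wfT_cons hβ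
    rw [iotaT, map_mul, NFM.val_mul, ih hγ]
    cases t with
    | tc =>
      rw [show tokW .tc = C from rfl, phi_C]
      rw [nmul_mix_inl n (γ := γ) (by simp [mix])]
      rfl
    | tb m =>
      rw [show tokW (.tb m) = A ^ m * B from rfl, phi_AmB (hβ m (by simp))]
      rw [nmul_mix_inl n (γ := γ) (by simp [mix])]
      rfl

theorem phi_iotaA (rα : List AD) : (phi n (iotaA rα)).val = some ([], rα) := by
  induction rα with
  | nil => rfl
  | cons x r ih =>
    rw [iotaA, map_mul, NFM.val_mul, ih]
    cases x with
    | a =>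
      rw [show adW .a = A from rfl, phi_A]
      cases r with
      | nil => rw [nmul_mix_inl n (γ := []) (by simp [mix])]; rfl
      | cons y r' => rw [nmul_mix_inr n (rδ := y :: r') (by simp [mix])]; rfl
    | d =>
      rw [show adW .d = D from rfl, phi_D]
      cases r with
      | nil => rw [nmul_mix_inl n (γ := []) (by simp [mix])]; rfl
      | cons y r' => rw [nmul_mix_inr n (rδ := y :: r') (by simp [mix])]; rfl

theorem phi_iota (s : NF0) (hs : wfN n s) : (phi n (iota s)).val = s := by
  cases s with
  | none => rfl
  | some p =>
    obtain ⟨β, rα⟩ := p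
    rw [iota, map_mul, NFM.val_mul, phi_iotaT β (hs β rα rfl), phi_iotaA]
    rw [nmul_mix_inl n (γ := []) (by simp [mix])]
    simp

theorem philem (p q : W) (s : NF0) (hs : wfN n s) :
    (phi n (p * iota s * q)).val = nmul n (nmul n (phi n p).val s) (phi n q).val := by
  rw [map_mul, map_mul, NFM.val_mul, NFM.val_mul, phi_iota s hs]

end R1

/-! ## Invertibility of nonzero normal forms -/

section Plem

variable {n : ℕ}

theorem mD_tok {m : ℕ} (hm : m < n) : Mcon n (D * (A ^ m * B)) 1 := by
  rcases Nat.eq_zero_or_pos m with h0 | h0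
  · subst h0; simpa using mDB (n := n)
  · simpa [mul_assoc] using mDAB (n := n) h0 (by omega)

theorem mD_tokW {t : Tok} (ht : ∀ m, t = .tb m → m < n) : Mcon n (D * tokW t) 1 := by
  cases t with
  | tc => exact mDC
  | tb m => exact mD_tok (ht m rfl)

theorem PlemT (β : List Tok) (hβ : wfT n β) :
    ∃ p q : W, Mcon n (p * iotaT β * q) 1 := by
  induction β with
  | nil => exact ⟨1, 1, mcon_of_eq (by simp [iotaT])⟩
  | cons t γ ih =>
    obtain ⟨p, q, h⟩ := ih (wfT_cons hβ)
    refine ⟨p * D, q, ?_⟩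
    have k1 : Mcon n (D * tokW t) 1 := mD_tokW (fun m hm => hβ m (by rw [← hm]; simp))
    have k2 : Mcon n (p * ((D * tokW t) * iotaT γ) * q) (p * ((1 : W) * iotaT γ) * q) :=
      mconR q (mconL p (mconR (iotaT γ) k1))
    have e1 : p * D * iotaT (t :: γ) * q = p * ((D * tokW t) * iotaT γ) * q := by
      simp [iotaT, mul_assoc]
    have e2 : p * ((1 : W) * iotaT γ) * q = p * iotaT γ * q := by simp
    exact ((mcon_of_eq e1).trans k2).trans ((mcon_of_eq e2).trans h)

theorem Plem (rα : List AD) (β : List Tok) (hβ : wfT n β) :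
    ∃ p q : W, Mcon n (p * (iotaT β * iotaA rα) * q) 1 := by
  induction rα with
  | nil =>
    obtain ⟨p, q, h⟩ := PlemT β hβ
    exact ⟨p, q, (mcon_of_eq (by simp [iotaA])).trans h⟩
  | cons x r ih =>
    obtain ⟨p, q, h⟩ := ih
    have kill : ∃ k : W, Mcon n (adW x * k) 1 := by
      cases x with
      | a => exact ⟨C, mAC⟩
      | d => exact ⟨B, mDB⟩
    obtain ⟨k, hk⟩ := kill
    refine ⟨p, k * q, ?_⟩
    have k2 : Mcon n (p * ((iotaT β * iotaA r) * (adW x * k)) * q)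
        (p * ((iotaT β * iotaA r) * 1) * q) :=
      mconR q (mconL p (mconL (iotaT β * iotaA r) hk))
    have e1 : p * (iotaT β * iotaA (x :: r)) * (k * q) =
        p * ((iotaT β * iotaA r) * (adW x * k)) * q := by
      simp [iotaA, mul_assoc]
    have e2 : p * ((iotaT β * iotaA r) * 1) * q = p * (iotaT β * iotaA r) * q := by simp
    exact ((mcon_of_eq e1).trans k2).trans ((mcon_of_eq e2).trans h)

theorem Plem' (s : NF0) (hs : wfN n s) (hne : s ≠ none) :
    ∃ p q : W, Mcon n (p * iota s * q) 1 := by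
  cases s with
  | none => exact absurd rfl hne
  | some p =>
    obtain ⟨β, rα⟩ := p
    exact Plem rα β (hs β rα rfl)

end Plem

/-! ## Separation: helper computations -/

section SepComp

variable {n : ℕ}

theorem mix_rep_a_lt' {k m : ℕ} {γ : List Tok} (h : m + k < n) :
    mix n (List.replicate k .a) (.tb m :: γ) = some (.inl (.tb (m + k) :: γ)) := by
  induction k generalizing m with
  | zero => simp [mix]
  | succ k ih =>
    rw [List.replicate_succ]
    have hg : m + 1 < n := by omega
    simp only [mix, if_pos hg]
    have := ih (m := m + 1) (by omega)
    rw [this]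
    have e : m + 1 + k = m + (k + 1) := by omega
    rw [e]

theorem mix_rep_a_ge' {k m : ℕ} {γ : List Tok} (h : n ≤ m + k) (hm : m < n) :
    mix n (List.replicate k .a) (.tb m :: γ) = none := by
  induction k generalizing m with
  | zero => exact absurd h (by omega)
  | succ k ih =>
    rw [List.replicate_succ]
    by_cases hg : m + 1 < n
    · simp only [mix, if_pos hg]
      exact ih (by omega) hg
    · simp only [mix, if_neg hg]

theorem mix_rep_d (k : ℕ) : ∀ β : List Tok, mix n (List.replicate k .d) β =
    if k ≤ β.length then some (.inl (β.drop k)) else some (.inr (List.replicate (k - β.length) .d)) := by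
  induction k with
  | zero => intro β; simp [mix]
  | succ k ih =>
    intro β
    cases β with
    | nil => simp [mix, List.replicate_succ]
    | cons t β =>
      rw [List.replicate_succ]
      have : mix n (.d :: List.replicate k .d) (t :: β) = mix n (List.replicate k .d) β := by
        cases t <;> simp [mix]
      rw [this, ih β]
      by_cases hk : k ≤ β.length
      · rw [if_pos hk, if_pos (by simpa using hk)]
        simp
      · rw [if_neg hk, if_neg (by simpa using hk)]
        simp only [List.length_cons]
        have e : k + 1 - (β.length + 1) = k - β.length := by omega
        rw [e]

theorem nA_tb {k m : ℕ} {γ : List Tok} {rα : List AD} (h : m + k < n) :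
    nmul n (some ([], List.replicate k .a)) (some (.tb m :: γ, rα)) =
      some (.tb (m + k) :: γ, rα) := by
  rw [nmul_mix_inl n (mix_rep_a_lt' h)]; simp

theorem nA_tb0 {k m : ℕ} {γ : List Tok} {rα : List AD} (h1 : n ≤ m + k) (h2 : m < n) :
    nmul n (some ([], List.replicate k .a)) (some (.tb m :: γ, rα)) = none :=
  nmul_mix_none n (mix_rep_a_ge' h1 h2)

theorem nA_tc {γ : List Tok} {rα : List AD} :
    nmul n (some ([], [.a])) (some (.tc :: γ, rα)) = some (γ, rα) := by
  rw [nmul_mix_inl n (γ := γ) (by simp [mix])]; simp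

theorem nD1 {t : Tok} {γ : List Tok} {rα : List AD} :
    nmul n (some ([], [.d])) (some (t :: γ, rα)) = some (γ, rα) := by
  rw [nmul_mix_inl n (γ := γ) (by cases t <;> simp [mix])]; simp

theorem nDk {β : List Tok} {γ : List Tok} {rα : List AD} :
    nmul n (some ([], List.replicate β.length .d)) (some (β ++ γ, rα)) = some (γ, rα) := by
  rw [nmul_mix_inl n (γ := γ)]
  · simp
  · rw [mix_rep_d, if_pos (by simp)]
    congr 2
    simp [List.drop_append]

theorem ncat {β₁ β₂ : List Tok} {rα : List AD} :
    nmul n (some (β₁, [])) (some (β₂, rα)) = some (β₁ ++ β₂, rα) := by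
  rw [nmul_mix_inl n (γ := β₂) (by simp [mix])]

theorem strip_c {β : List Tok} {x : AD} {r : List AD} :
    nmul n (some (β, x :: r)) (some ([.tc], [])) = some (β, r) := by
  cases r with
  | nil => cases x <;> rw [nmul_mix_inl n (γ := []) (by simp [mix])] <;> simp
  | cons y r' => cases x <;> rw [nmul_mix_inr n (rδ := y :: r') (by simp [mix])] <;> simp

theorem strip_d_tb {β : List Tok} {r : List AD} {m : ℕ} :
    nmul n (some (β, .d :: r)) (some ([.tb m], [])) = some (β, r) := by
  cases r with
  | nil => rw [nmul_mix_inl n (γ := []) (by simp [mix])]; simp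
  | cons y r' => rw [nmul_mix_inr n (rδ := y :: r') (by simp [mix])]; simp

theorem kill_a (hn : 1 ≤ n) {β : List Tok} {r : List AD} :
    nmul n (some (β, .a :: r)) (some ([.tb (n - 1)], [])) = none := by
  apply nmul_mix_none
  have hg : ¬ (n - 1 + 1 < n) := by omega
  simp [mix, hg]

theorem phi_pow_D (k : ℕ) : (phi n (D ^ k)).val = some ([], List.replicate k .d) := by
  induction k with
  | zero => simp
  | succ k ih =>
    have : D ^ (k + 1) = D * D ^ k := by rw [pow_succ']
    rw [this, map_mul, NFM.val_mul, phi_D, ih]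
    rw [nmul_mix_inr n (rδ := [.d]) (by cases k <;> simp [mix])]
    simp [List.replicate_succ']

end SepComp

/-! ## The separation predicate -/

section Sep

variable {n : ℕ}

def Sepa (n : ℕ) (s t : NF0) : Prop := ∃ p q : W,
  (nmul n (nmul n (phi n p).val s) (phi n q).val = none ∧
    nmul n (nmul n (phi n p).val t) (phi n q).val ≠ none) ∨
  (nmul n (nmul n (phi n p).val s) (phi n q).val ≠ none ∧
    nmul n (nmul n (phi n p).val t) (phi n q).val = none)

theorem Sepa_symm {s t : NF0} (h : Sepa n s t) : Sepa n t s := by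
  obtain ⟨p, q, h | h⟩ := h
  · exact ⟨p, q, Or.inr ⟨h.2, h.1⟩⟩
  · exact ⟨p, q, Or.inl ⟨h.2, h.1⟩⟩

theorem Sepa_base {s t : NF0} (hs : s = none) (ht : t ≠ none) : Sepa n s t := by
  refine ⟨1, 1, Or.inl ⟨?_, ?_⟩⟩
  · rw [show (phi n (1:W)).val = some ([],[]) from rfl, one_nmul, nmul_one, hs]
  · rw [show (phi n (1:W)).val = some ([],[]) from rfl, one_nmul, nmul_one]
    exact ht

theorem Sepa_base' {s t : NF0} (hs : s ≠ none) (ht : t = none) : Sepa n s t :=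
  Sepa_symm (Sepa_base ht hs)

theorem Sepa_of_right {s t : NF0} (w : W)
    (h : Sepa n (nmul n s (phi n w).val) (nmul n t (phi n w).val)) : Sepa n s t := by
  obtain ⟨p, q, h⟩ := h
  refine ⟨p, w * q, ?_⟩
  have e : ∀ u : NF0, nmul n (nmul n (phi n p).val u) (phi n (w * q)).val =
      nmul n (nmul n (phi n p).val (nmul n u (phi n w).val)) (phi n q).val := by
    intro u
    rw [map_mul, NFM.val_mul, ← nmul_assoc, ← nmul_assoc]
  rw [e s, e t]
  exact h

theorem Sepa_of_left {s t : NF0} (w : W)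
    (h : Sepa n (nmul n (phi n w).val s) (nmul n (phi n w).val t)) : Sepa n s t := by
  obtain ⟨p, q, h⟩ := h
  refine ⟨p * w, q, ?_⟩
  have e : ∀ u : NF0, nmul n (nmul n (phi n (p * w)).val u) (phi n q).val =
      nmul n (nmul n (phi n p).val (nmul n (phi n w).val u)) (phi n q).val := by
    intro u
    rw [map_mul, NFM.val_mul, ← nmul_assoc]
  rw [e s, e t]
  exact h

end Sep

/-! ## Separation for token lists -/

section Dtok

variable {n : ℕ}

theorem sep_nil (hn : 1 ≤ n) (t₂ : Tok) (γ' : List Tok) (hw : wfT n (t₂ :: γ')) :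
    Sepa n (some ([], [])) (some (t₂ :: γ', [])) := by
  cases t₂ with
  | tc =>
    apply Sepa_of_left A
    apply Sepa_of_right (A ^ (n-1) * B)
    rw [phi_A, phi_AmB (by omega)]
    apply Sepa_base
    · rw [nmul_one]
      exact kill_a hn (β := []) (r := [])
    · rw [nA_tc, ncat]; simp
  | tb m =>
    have hm : m < n := hw m (by simp)
    apply Sepa_of_left (A ^ (n - m))
    rw [phi_pow_A]
    apply Sepa_base'
    · rw [nmul_one]; simp
    · exact nA_tb0 (by omega) hm

theorem sep_tb_tb (hn : 1 ≤ n) {γ : List Tok} {m₁ m₂ : ℕ} (h : m₂ < m₁) (h1 : m₁ < n) :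
    Sepa n (some (.tb m₁ :: γ, [])) (some (.tb m₂ :: γ, [])) := by
  apply Sepa_of_left (A ^ (n - m₁))
  rw [phi_pow_A]
  apply Sepa_base
  · exact nA_tb0 (by omega) h1
  · rw [nA_tb (by omega)]; simp

theorem Dtok (hn : 1 ≤ n) : ∀ (N : ℕ) (γ₁ γ₂ : List Tok), γ₁.length + γ₂.length ≤ N →
    wfT n γ₁ → wfT n γ₂ → γ₁ ≠ γ₂ → Sepa n (some (γ₁, [])) (some (γ₂, [])) := by
  intro N
  induction N with
  | zero =>
    intro γ₁ γ₂ hlen h1 h2 hne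
    cases γ₁ <;> cases γ₂ <;> simp at hlen hne
  | succ N ih =>
    intro γ₁ γ₂ hlen hw1 hw2 hne
    have tbtc : ∀ (γ : List Tok) (m : ℕ), wfT n γ → m < n → γ.length + γ.length + 2 ≤ N + 1 →
        Sepa n (some (.tb m :: γ, [])) (some (.tc :: γ, [])) := by
      intro γ m hγ hm hlen'
      by_cases hg : m + 1 < n
      · apply Sepa_of_left A
        rw [phi_A]
        have e1 : nmul n (some ([], [.a])) (some (.tb m :: γ, [])) =
            some (.tb (m+1) :: γ, []) := by
          simpa using nA_tb (k := 1) (m := m) (γ := γ) (rα := []) (by omega)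
        rw [e1, nA_tc]
        refine ih (.tb (m+1) :: γ) γ (by simp; omega) ?_ hγ (by simp)
        intro m' hm'
        rcases List.mem_cons.1 hm' with h' | h'
        · cases h'; exact hg
        · exact hγ m' h'
      · apply Sepa_of_left A
        rw [phi_A]
        apply Sepa_base
        · simpa using nA_tb0 (k := 1) (m := m) (γ := γ) (rα := []) (by omega) hm
        · rw [nA_tc]; simp
    cases γ₁ with
    | nil =>
      cases γ₂ with
      | nil => exact absurd rfl hne
      | cons t₂ γ' => exact sep_nil hn t₂ γ' hw2
    | cons t₁ γ₁' =>
      cases γ₂ with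
      | nil => exact Sepa_symm (sep_nil hn t₁ γ₁' hw1)
      | cons t₂ γ₂' =>
        by_cases htl : γ₁' = γ₂'
        · subst htl
          have hhd : t₁ ≠ t₂ := by intro h; exact hne (by rw [h])
          cases t₁ with
          | tc =>
            cases t₂ with
            | tc => exact absurd rfl hhd
            | tb m =>
              exact Sepa_symm (tbtc γ₁' m (wfT_cons hw1) (hw2 m (by simp))
                (by simp at hlen; omega))
          | tb m₁ =>
            cases t₂ with
            | tc =>
              exact tbtc γ₁' m₁ (wfT_cons hw1) (hw1 m₁ (by simp)) (by simp at hlen; omega)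
            | tb m₂ =>
              have hne12 : m₁ ≠ m₂ := by intro h; exact hhd (by rw [h])
              rcases Nat.lt_or_ge m₁ m₂ with h | h
              · exact Sepa_symm (sep_tb_tb hn h (hw2 m₂ (by simp)))
              · exact sep_tb_tb hn (by omega) (hw1 m₁ (by simp))
        · apply Sepa_of_left D
          rw [phi_D, nD1, nD1]
          exact ih γ₁' γ₂' (by simp at hlen ⊢; omega) (wfT_cons hw1) (wfT_cons hw2) htl

end Dtok

/-! ## The main separation lemma -/

section Dmain

variable {n : ℕ}

theorem nDk' {β : List Tok} {rα : List AD} :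
    nmul n (some ([], List.replicate β.length .d)) (some (β, rα)) = some ([], rα) := by
  simpa using nDk (n := n) (β := β) (γ := []) (rα := rα)

theorem wfT_append_tb0 (hn : 1 ≤ n) {β : List Tok} (h : wfT n β) :
    wfT n (β ++ [Tok.tb 0]) := by
  intro m hm
  rcases List.mem_append.1 hm with h' | h'
  · exact h m h'
  · simp at h'; omega

theorem Dmain (hn : 1 ≤ n) : ∀ (N : ℕ) (β₁ : List Tok) (rα₁ : List AD) (β₂ : List Tok)
    (rα₂ : List AD), rα₁.length + rα₂.length ≤ N → wfT n β₁ → wfT n β₂ →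
    (β₁, rα₁) ≠ (β₂, rα₂) → Sepa n (some (β₁, rα₁)) (some (β₂, rα₂)) := by
  intro N
  induction N with
  | zero =>
    intro β₁ rα₁ β₂ rα₂ hlen hw1 hw2 hne
    cases rα₁ with
    | cons x r => simp at hlen
    | nil =>
      cases rα₂ with
      | cons y r => simp at hlen
      | nil => exact Dtok hn (β₁.length + β₂.length) β₁ β₂ le_rfl hw1 hw2 (by simpa using hne)
  | succ N ih =>
    intro β₁ rα₁ β₂ rα₂ hlen hw1 hw2 hne
    have vsnil : ∀ (βa : List Tok) (x : AD) (r : List AD) (βb : List Tok),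
        r.length + 1 ≤ N + 1 → wfT n βa → wfT n βb →
        Sepa n (some (βa, x :: r)) (some (βb, [])) := by
      intro βa x r βb hlen' hwa hwb
      cases x with
      | a =>
        apply Sepa_of_right (A ^ (n-1) * B)
        rw [phi_AmB (by omega)]
        apply Sepa_base
        · exact kill_a hn
        · rw [ncat]; simp
      | d =>
        by_cases hcol : (βa, r) = (βb ++ [Tok.tb 0], ([] : List AD))
        · rw [Prod.mk.injEq] at hcol
          obtain ⟨h1, h2⟩ := hcol
          subst h1; subst h2
          apply Sepa_of_left (D ^ βb.length)
          rw [phi_pow_D]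
          rw [nDk (γ := [Tok.tb 0]) (rα := [AD.d]), nDk']
          apply Sepa_of_left (A ^ n)
          rw [phi_pow_A]
          apply Sepa_base
          · exact nA_tb0 (k := n) (m := 0) (by omega) (by omega)
          · rw [nmul_one]; simp
        · apply Sepa_of_right B
          rw [phi_B, strip_d_tb, ncat]
          exact ih βa r (βb ++ [Tok.tb 0]) [] (by simp at hlen' ⊢; omega) hwa
            (wfT_append_tb0 hn hwb) hcol
    cases rα₁ with
    | nil =>
      cases rα₂ with
      | nil => exact Dtok hn (β₁.length + β₂.length) β₁ β₂ le_rfl hw1 hw2 (by simpa using hne)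
      | cons y r₂ =>
        exact Sepa_symm (vsnil β₂ y r₂ β₁ (by simpa using hlen) hw2 hw1)
    | cons x r₁ =>
      cases rα₂ with
      | nil => exact vsnil β₁ x r₁ β₂ (by simp at hlen ⊢; omega) hw1 hw2
      | cons y r₂ =>
        by_cases hcol : (β₁, r₁) = (β₂, r₂)
        · rw [Prod.mk.injEq] at hcol
          obtain ⟨h1, h2⟩ := hcol
          subst h1; subst h2
          have hxy : x ≠ y := by
            intro h; subst h; exact hne rfl
          cases x with
          | a =>
            cases y with
            | a => exact absurd rfl hxy
            | d =>
              apply Sepa_of_right (A ^ (n-1) * B)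
              rw [phi_AmB (by omega)]
              apply Sepa_base
              · exact kill_a hn
              · rw [strip_d_tb]; simp
          | d =>
            cases y with
            | d => exact absurd rfl hxy
            | a =>
              apply Sepa_of_right (A ^ (n-1) * B)
              rw [phi_AmB (by omega)]
              apply Sepa_base'
              · rw [strip_d_tb]; simp
              · exact kill_a hn
        · apply Sepa_of_right C
          rw [phi_C, strip_c, strip_c]
          exact ih β₁ r₁ β₂ r₂ (by simp at hlen ⊢; omega) hw1 hw2 hcol

theorem Dlem (hn : 1 ≤ n) (s t : NF0) (hs : wfN n s) (ht : wfN n t) (hne : s ≠ t) :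
    Sepa n s t := by
  cases s with
  | none =>
    cases t with
    | none => exact absurd rfl hne
    | some p => exact Sepa_base (by simp) (by simp)
  | some p =>
    cases t with
    | none => exact Sepa_base' (by simp) (by simp)
    | some q =>
      obtain ⟨β₁, rα₁⟩ := p; obtain ⟨β₂, rα₂⟩ := q
      exact Dmain hn (rα₁.length + rα₂.length) β₁ rα₁ β₂ rα₂ le_rfl
        (hs β₁ rα₁ rfl) (ht β₂ rα₂ rfl) (by simpa using hne)

end Dmain

/-! ## Final assembly -/

section Final

variable {n : ℕ}

theorem mconPhi (hn : 1 ≤ n) {u v : W} (h : phi n u = phi n v) : Mcon n u v :=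
  ((R2 hn u).trans (mcon_of_eq (congrArg (fun x => iota x.val) h))).trans ((Mcon n).symm (R2 hn v))

theorem absorb2 (p q : W) : Mcon n (p * Z * q) Z :=
  (mconR q (absorbR p)).trans (absorbL q)

theorem mk_eq_iff {c : Con W} {x y : W} : c.mk' x = c.mk' y ↔ c x y := by
  have h := Con.ker_rel c.mk' (x := x) (y := y)
  rw [Con.mk'_ker] at h
  exact h.symm

end Final

theorem stmt10' (n : ℕ) (hn : 1 ≤ n) (ρ : Con (M n)) : ρ = ⊥ ∨ ρ = ⊤ := by
  by_cases hbot : ρ = ⊥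
  · exact Or.inl hbot
  right
  -- extract a nontrivially related pair
  have hex : ∃ x y, ρ x y ∧ x ≠ y := by
    by_contra h
    push_neg at h
    apply hbot
    apply le_antisymm ?_ bot_le
    intro a b hab
    exact (h a b hab) ▸ (⊥ : Con (M n)).refl a
  obtain ⟨x, y, hxy, hne⟩ := hex
  obtain ⟨u, rfl⟩ := Con.mk'_surjective x
  obtain ⟨v, rfl⟩ := Con.mk'_surjective y
  have hne' : ¬ Mcon n u v := fun h => hne (mk_eq_iff.2 h)
  have hst : (phi n u).val ≠ (phi n v).val := fun h => hne' (mconPhi hn (NFM.ext h))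
  obtain ⟨p, q, hsep⟩ := Dlem hn (phi n u).val (phi n v).val (phi_wf hn u) (phi_wf hn v) hst
  have conv : ∀ w : W, nmul n (nmul n (phi n p).val (phi n w).val) (phi n q).val =
      (phi n (p * w * q)).val := by
    intro w
    rw [map_mul, map_mul, NFM.val_mul, NFM.val_mul]
  -- from one annihilated side and one surviving side, relate the zero class to 1
  have main : ∀ a b : W, ρ ((Mcon n).mk' a) ((Mcon n).mk' b) →
      (phi n (p * a * q)).val = none → (phi n (p * b * q)).val ≠ none →
      ρ ((Mcon n).mk' Z) 1 := by
    intro a b hab hza hnb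
    have hMa : Mcon n (p * a * q) Z := by
      apply mconPhi hn
      apply NFM.ext
      rw [hza]
      rfl
    obtain ⟨p₁, q₁, hinv⟩ := Plem' (phi n (p * b * q)).val (phi_wf hn _) hnb
    have hMb : Mcon n (p₁ * (p * b * q) * q₁) 1 :=
      (mconR q₁ (mconL p₁ (R2 hn (p * b * q)))).trans hinv
    have hMa2 : Mcon n (p₁ * (p * a * q) * q₁) Z :=
      (mconR q₁ (mconL p₁ hMa)).trans (absorb2 p₁ q₁)
    have h4 : ρ ((Mcon n).mk' (p₁ * (p * a * q) * q₁)) ((Mcon n).mk' (p₁ * (p * b * q) * q₁)) := by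
      have h5 := ρ.mul (ρ.mul (ρ.refl ((Mcon n).mk' p₁))
        (ρ.mul (ρ.mul (ρ.refl ((Mcon n).mk' p)) hab) (ρ.refl ((Mcon n).mk' q))))
        (ρ.refl ((Mcon n).mk' q₁))
      simpa [← map_mul] using h5
    rw [mk_eq_iff.2 hMa2, mk_eq_iff.2 hMb] at h4
    simpa using h4
  -- apply in the correct orientation
  have hz1 : ρ ((Mcon n).mk' Z) 1 := by
    rcases hsep with ⟨h0, h1⟩ | ⟨h1, h0⟩
    · rw [conv u] at h0; rw [conv v] at h1
      exact main u v hxy h0 h1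
    · rw [conv v] at h0; rw [conv u] at h1
      exact main v u (ρ.symm hxy) h0 h1
  -- everything is related to the zero class
  have hall : ∀ x : M n, ρ x ((Mcon n).mk' Z) := by
    intro x
    obtain ⟨w, rfl⟩ := Con.mk'_surjective x
    have h6 := ρ.mul (ρ.refl ((Mcon n).mk' w)) (ρ.symm hz1)
    have e1 : (Mcon n).mk' w * 1 = (Mcon n).mk' w := mul_one _
    have e2 : (Mcon n).mk' w * (Mcon n).mk' Z = (Mcon n).mk' Z := by
      rw [← map_mul, mk_eq_iff.2 (absorbR w)]
    rw [e1, e2] at h6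
    exact h6
  ext a b
  exact iff_of_true (ρ.trans (hall a) (ρ.symm (hall b))) trivial

/-- `M n` is congruence-free: its only congruences are the identity relation
and the full relation. -/
theorem stmt10 (n : ℕ) (hn : 1 ≤ n) (ρ : Con (M n)) : ρ = ⊥ ∨ ρ = ⊤ := by
  exact stmt10' n hn ρ
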